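/- Every connected {Z₂, P₆}-free graph on at least 2 vertices has edge-connectivity equal to its minimum degree. -/

import Mathlib

open SimpleGraph

/-- The edge-connectivity of `G`: the minimum number of edges whose deletion disconnects `G`. -/
noncomputable def edgeConn {V : Type*} [Fintype V] (G : SimpleGraph V) : ℕ :=
  sInf {k | ∃ F : Finset (Sym2 V), ↑F ⊆ G.edgeSet ∧ F.card = k ∧ ¬ (G.deleteEdges ↑F).Connected}

/-- The minimum degree of `G`. -/
noncomputable def minDeg {V : Type*} [Fintype V] (G : SimpleGraph V) : ℕ :=
  sInf {d | ∃ v : V, d = (G.neighborSet v).ncard}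

/-- `Z₂`: a triangle `{0,1,2}` with a pendant path `2-3-4` of length 2. -/
def Z2 : SimpleGraph (Fin 5) :=
  SimpleGraph.fromEdgeSet {s(0,1), s(0,2), s(1,2), s(2,3), s(3,4)}

set_option linter.unusedVariables false
set_option linter.unnecessarySeqFocus false

lemma Z2_adj_iff (i j : Fin 5) : Z2.Adj i j ↔
    ((i=0∧j=1)∨(i=1∧j=0)∨(i=0∧j=2)∨(i=2∧j=0)∨(i=1∧j=2)∨(i=2∧j=1)
      ∨(i=2∧j=3)∨(i=3∧j=2)∨(i=3∧j=4)∨(i=4∧j=3)) := by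
  rw [Z2, fromEdgeSet_adj]
  constructor
  · rintro ⟨h, hne⟩
    simp only [Set.mem_insert_iff, Set.mem_singleton_iff] at h
    fin_cases i <;> fin_cases j <;> revert h <;> decide
  · intro h
    fin_cases i <;> fin_cases j <;> revert h <;> decide

lemma z2_of_config {V : Type*} {G : SimpleGraph V} (hZ2 : IsEmpty (Z2 ↪g G))
    (x0 x1 x2 x3 x4 : V)
    (h01 : G.Adj x0 x1) (h02 : G.Adj x0 x2) (h12 : G.Adj x1 x2)
    (h23 : G.Adj x2 x3) (h34 : G.Adj x3 x4)
    (n03 : ¬ G.Adj x0 x3) (n04 : ¬ G.Adj x0 x4)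
    (n13 : ¬ G.Adj x1 x3) (n14 : ¬ G.Adj x1 x4)
    (n24 : ¬ G.Adj x2 x4) : False := by
  have ne01 : x0 ≠ x1 := h01.ne
  have ne02 : x0 ≠ x2 := h02.ne
  have ne12 : x1 ≠ x2 := h12.ne
  have ne23 : x2 ≠ x3 := h23.ne
  have ne34 : x3 ≠ x4 := h34.ne
  have ne03 : x0 ≠ x3 := fun h => n04 (h ▸ h34)
  have ne04 : x0 ≠ x4 := fun h => n03 (h ▸ h34.symm)
  have ne13 : x1 ≠ x3 := fun h => n14 (h ▸ h34)
  have ne14 : x1 ≠ x4 := fun h => n13 (h ▸ h34.symm)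
  have ne24 : x2 ≠ x4 := fun h => n04 (h ▸ h02)
  let f : Fin 5 → V := ![x0, x1, x2, x3, x4]
  have hinj : Function.Injective f := by
    intro i j hij
    fin_cases i <;> fin_cases j <;>
      simp only [f, Matrix.cons_val_zero, Matrix.cons_val_one, Matrix.head_cons,
        Matrix.cons_val_succ] at hij ⊢ <;>
      first
        | rfl
        | exact absurd hij ne01 | exact absurd hij ne01.symm
        | exact absurd hij ne02 | exact absurd hij ne02.symm
        | exact absurd hij ne12 | exact absurd hij ne12.symm
        | exact absurd hij ne23 | exact absurd hij ne23.symm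
        | exact absurd hij ne34 | exact absurd hij ne34.symm
        | exact absurd hij ne03 | exact absurd hij ne03.symm
        | exact absurd hij ne04 | exact absurd hij ne04.symm
        | exact absurd hij ne13 | exact absurd hij ne13.symm
        | exact absurd hij ne14 | exact absurd hij ne14.symm
        | exact absurd hij ne24 | exact absurd hij ne24.symm
  refine hZ2.elim ⟨⟨f, hinj⟩, ?_⟩
  intro i j
  fin_cases i <;> fin_cases j <;>
    simp only [f, Matrix.cons_val_zero, Matrix.cons_val_one, Matrix.head_cons,
      Matrix.cons_val_succ] <;>
    first
      | (refine iff_of_true ?_ ((Z2_adj_iff _ _).mpr (by decide)) <;>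
          first
            | exact h01 | exact h01.symm | exact h02 | exact h02.symm
            | exact h12 | exact h12.symm | exact h23 | exact h23.symm
            | exact h34 | exact h34.symm)
      | (refine iff_of_false ?_ (fun h => by exact absurd ((Z2_adj_iff _ _).mp h) (by decide)) <;>
          first
            | exact n03 | exact fun h => n03 h.symm | exact n04 | exact fun h => n04 h.symm
            | exact n13 | exact fun h => n13 h.symm | exact n14 | exact fun h => n14 h.symm
            | exact n24 | exact fun h => n24 h.symm | exact G.loopless.irrefl _)

lemma p6_of_config {V : Type*} {G : SimpleGraph V} (hP6 : IsEmpty (pathGraph 6 ↪g G))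
    (x0 x1 x2 x3 x4 x5 : V)
    (h01 : G.Adj x0 x1) (h12 : G.Adj x1 x2) (h23 : G.Adj x2 x3)
    (h34 : G.Adj x3 x4) (h45 : G.Adj x4 x5)
    (n02 : ¬ G.Adj x0 x2) (n03 : ¬ G.Adj x0 x3) (n04 : ¬ G.Adj x0 x4)
    (n05 : ¬ G.Adj x0 x5) (n13 : ¬ G.Adj x1 x3) (n14 : ¬ G.Adj x1 x4)
    (n15 : ¬ G.Adj x1 x5) (n24 : ¬ G.Adj x2 x4) (n25 : ¬ G.Adj x2 x5)
    (n35 : ¬ G.Adj x3 x5) : False := by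
  have ne01 : x0 ≠ x1 := h01.ne
  have ne12 : x1 ≠ x2 := h12.ne
  have ne23 : x2 ≠ x3 := h23.ne
  have ne34 : x3 ≠ x4 := h34.ne
  have ne45 : x4 ≠ x5 := h45.ne
  have ne02 : x0 ≠ x2 := fun h => n03 (h ▸ h23)
  have ne03 : x0 ≠ x3 := fun h => n04 (h ▸ h34)
  have ne04 : x0 ≠ x4 := fun h => n05 (h ▸ h45)
  have ne05 : x0 ≠ x5 := fun h => n04 (h ▸ h45.symm)
  have ne13 : x1 ≠ x3 := fun h => n14 (h ▸ h34)
  have ne14 : x1 ≠ x4 := fun h => n15 (h ▸ h45)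
  have ne15 : x1 ≠ x5 := fun h => n14 (h ▸ h45.symm)
  have ne24 : x2 ≠ x4 := fun h => n25 (h ▸ h45)
  have ne25 : x2 ≠ x5 := fun h => n24 (h ▸ h45.symm)
  have ne35 : x3 ≠ x5 := fun h => n25 ((h ▸ h23.symm).symm)
  let f : Fin 6 → V := ![x0, x1, x2, x3, x4, x5]
  have hinj : Function.Injective f := by
    intro i j hij
    fin_cases i <;> fin_cases j <;>
      simp only [f, Matrix.cons_val_zero, Matrix.cons_val_one, Matrix.head_cons,
        Matrix.cons_val_succ] at hij ⊢ <;>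
      first
        | rfl
        | exact absurd hij ne01 | exact absurd hij ne01.symm
        | exact absurd hij ne02 | exact absurd hij ne02.symm
        | exact absurd hij ne03 | exact absurd hij ne03.symm
        | exact absurd hij ne04 | exact absurd hij ne04.symm
        | exact absurd hij ne05 | exact absurd hij ne05.symm
        | exact absurd hij ne12 | exact absurd hij ne12.symm
        | exact absurd hij ne13 | exact absurd hij ne13.symm
        | exact absurd hij ne14 | exact absurd hij ne14.symm
        | exact absurd hij ne15 | exact absurd hij ne15.symm
        | exact absurd hij ne23 | exact absurd hij ne23.symm
        | exact absurd hij ne24 | exact absurd hij ne24.symm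
        | exact absurd hij ne25 | exact absurd hij ne25.symm
        | exact absurd hij ne34 | exact absurd hij ne34.symm
        | exact absurd hij ne35 | exact absurd hij ne35.symm
        | exact absurd hij ne45 | exact absurd hij ne45.symm
  refine hP6.elim ⟨⟨f, hinj⟩, ?_⟩
  intro i j
  fin_cases i <;> fin_cases j <;>
    simp only [f, Matrix.cons_val_zero, Matrix.cons_val_one, Matrix.head_cons,
      Matrix.cons_val_succ] <;>
    first
      | (refine iff_of_true ?_ (pathGraph_adj.mpr (by decide)) <;>
          first
            | exact h01 | exact h01.symm | exact h12 | exact h12.symm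
            | exact h23 | exact h23.symm | exact h34 | exact h34.symm
            | exact h45 | exact h45.symm)
      | (refine iff_of_false ?_ (fun h => by exact absurd (pathGraph_adj.mp h) (by decide)) <;>
          first
            | exact n02 | exact fun h => n02 h.symm | exact n03 | exact fun h => n03 h.symm
            | exact n04 | exact fun h => n04 h.symm | exact n05 | exact fun h => n05 h.symm
            | exact n13 | exact fun h => n13 h.symm | exact n14 | exact fun h => n14 h.symm
            | exact n15 | exact fun h => n15 h.symm | exact n24 | exact fun h => n24 h.symm
            | exact n25 | exact fun h => n25 h.symm | exact n35 | exact fun h => n35 h.symm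
            | exact G.loopless.irrefl _)

lemma exists_deep {V : Type*} [Fintype V] [DecidableEq V] {G : SimpleGraph V} [DecidableRel G.Adj]
    {F : Finset (Sym2 V)} {P : V → Prop} [DecidablePred P] {δ : ℕ}
    (hcut : ∀ x y, G.Adj x y → P x → ¬ P y → s(x,y) ∈ F)
    (hδ : ∀ v, δ ≤ G.degree v) (hk : F.card < δ)
    {v0 : V} (hv0 : P v0) :
    ∃ a, P a ∧ ∀ y, G.Adj a y → P y := by
  by_contra hno
  push_neg at hno
  have hno' : ∀ a, P a → ∃ y, G.Adj a y ∧ ¬ P y := by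
    intro a ha
    obtain ⟨y, hy1, hy2⟩ := hno a ha
    exact ⟨y, hy1, hy2⟩
  choose w hw1 hw2 using hno'
  classical
  set A : Finset V := Finset.univ.filter P with hA
  have hmemA : ∀ x, x ∈ A ↔ P x := by simp [hA]
  have hv0A : v0 ∈ A := (hmemA v0).mpr hv0
  set E1 : Finset (Sym2 V) :=
    (A.erase v0).attach.image (fun a => s(a.1, w a.1 ((hmemA a.1).mp (Finset.mem_of_mem_erase a.2)))) with hE1
  set E2 : Finset (Sym2 V) := (G.neighborFinset v0 \ A).image (fun y => s(v0, y)) with hE2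
  have hE1F : E1 ⊆ F := by
    intro e he
    rw [hE1] at he
    simp only [Finset.mem_image, Finset.mem_attach, true_and, Subtype.exists] at he
    obtain ⟨a, ha, rfl⟩ := he
    have hPa : P a := (hmemA a).mp (Finset.mem_of_mem_erase ha)
    exact hcut _ _ (hw1 a hPa) hPa (hw2 a hPa)
  have hE2F : E2 ⊆ F := by
    intro e he
    rw [hE2] at he
    simp only [Finset.mem_image, Finset.mem_sdiff, mem_neighborFinset] at he
    obtain ⟨y, ⟨hy1, hy2⟩, rfl⟩ := he
    exact hcut _ _ hy1 hv0 (fun h => hy2 ((hmemA y).mpr h))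
  have hcard1 : E1.card = (A.erase v0).card := by
    rw [hE1]
    rw [Finset.card_image_of_injective _ ?_, Finset.card_attach]
    rintro ⟨a, ha⟩ ⟨b, hb⟩ hab
    have hPa : P a := (hmemA a).mp (Finset.mem_of_mem_erase ha)
    have hPb : P b := (hmemA b).mp (Finset.mem_of_mem_erase hb)
    simp only [Sym2.eq_iff] at hab
    rcases hab with ⟨h1, _⟩ | ⟨h1, h2⟩
    · exact Subtype.ext h1
    · exact absurd hPa (h1 ▸ hw2 b hPb)
  have hcard2 : E2.card = (G.neighborFinset v0 \ A).card := by
    rw [hE2]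
    apply Finset.card_image_of_injective
    intro y z hyz
    simp only [Sym2.eq_iff] at hyz
    rcases hyz with ⟨_, h⟩ | ⟨h1, h2⟩
    · exact h
    · exact h2.trans h1
  have hdisj : Disjoint E1 E2 := by
    rw [Finset.disjoint_left]
    intro e he1 he2
    rw [hE1] at he1; rw [hE2] at he2
    simp only [Finset.mem_image, Finset.mem_attach, true_and, Subtype.exists,
      Finset.mem_sdiff, mem_neighborFinset] at he1 he2
    obtain ⟨a, ha, rfl⟩ := he1
    obtain ⟨y, ⟨hy1, hy2⟩, he⟩ := he2
    have hPa : P a := (hmemA a).mp (Finset.mem_of_mem_erase ha)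
    rw [Sym2.eq_iff] at he
    rcases he with ⟨h1, _⟩ | ⟨h1, h2⟩
    · exact (Finset.ne_of_mem_erase ha) h1.symm
    · exact hy2 ((hmemA y).mpr (h2 ▸ hPa))
  -- counting
  have hsub : E1 ∪ E2 ⊆ F := Finset.union_subset hE1F hE2F
  have hFcard : E1.card + E2.card ≤ F.card := by
    rw [← Finset.card_union_of_disjoint hdisj]
    exact Finset.card_le_card hsub
  have hinter : (G.neighborFinset v0 ∩ A).card ≤ (A.erase v0).card := by
    apply Finset.card_le_card
    intro x hx
    rw [Finset.mem_inter] at hx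
    exact Finset.mem_erase.mpr ⟨fun h => G.irrefl (h ▸ (mem_neighborFinset _ _ _).mp hx.1), hx.2⟩
  have hsplit : (G.neighborFinset v0 \ A).card + (G.neighborFinset v0 ∩ A).card
      = G.degree v0 := by
    rw [Finset.card_sdiff_add_card_inter]
    rfl
  have := hδ v0
  omega

lemma case4 {V : Type*} [Fintype V] [DecidableEq V] {G : SimpleGraph V} [DecidableRel G.Adj]
    (hZ2 : IsEmpty (Z2 ↪g G)) (hP6 : IsEmpty (pathGraph 6 ↪g G))
    {F : Finset (Sym2 V)} {P : V → Prop} {δ : ℕ}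
    (hcut : ∀ x y, G.Adj x y → P x → ¬ P y → s(x,y) ∈ F)
    (hδ : ∀ w, δ ≤ G.degree w) (hk : F.card < δ)
    {a p u v b : V} (hPa : P a) (hPp : P p) (hPu : P u) (hPv : ¬P v) (hPb : ¬P b)
    (hap : G.Adj a p) (hpu : G.Adj p u) (huv : G.Adj u v) (hvb : G.Adj v b)
    (nau : ¬G.Adj a u) (nav : ¬G.Adj a v) (nab : ¬G.Adj a b)
    (npv : ¬G.Adj p v) (npb : ¬G.Adj p b) (nub : ¬G.Adj u b)
    (hdeepa : ∀ y, G.Adj a y → P y) (hdeepb : ∀ y, G.Adj b y → ¬P y) : False := by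
  classical
  set N : Finset V := (G.neighborFinset b).erase v with hN
  have hNmem : ∀ b' ∈ N, G.Adj b b' ∧ b' ≠ v := by
    intro b' hb'
    rw [hN, Finset.mem_erase, mem_neighborFinset] at hb'
    exact ⟨hb'.2, hb'.1⟩
  have hNP : ∀ b' ∈ N, ¬ P b' := fun b' hb' => hdeepb b' (hNmem b' hb').1
  have key : ∀ b' ∈ N, G.Adj b' u ∨ G.Adj b' p := by
    intro b' hb'
    obtain ⟨hbb', hbv⟩ := hNmem b' hb'
    by_contra hcon
    push_neg at hcon
    obtain ⟨nbu, nbp⟩ := hcon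
    by_cases hbv' : G.Adj b' v
    · exact z2_of_config hZ2 b b' v u p hbb' hvb.symm hbv' huv.symm hpu.symm
        (fun h => nub h.symm) (fun h => npb h.symm) nbu nbp (fun h => npv h.symm)
    · exact p6_of_config hP6 b' b v u p a hbb'.symm hvb.symm huv.symm hpu.symm hap.symm
        hbv' nbu nbp (fun h => hNP b' hb' (hdeepa b' h.symm))
        (fun h => nub h.symm) (fun h => npb h.symm) (fun h => nab h.symm)
        (fun h => npv h.symm) (fun h => nav h.symm) (fun h => nau h.symm)
  set g : V → Sym2 V := fun b' => if G.Adj b' u then s(b', u) else s(b', p) with hg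
  have hgF : ∀ b' ∈ N, g b' ∈ F := by
    intro b' hb'
    show (if G.Adj b' u then s(b', u) else s(b', p)) ∈ F
    by_cases hbu : G.Adj b' u
    · rw [if_pos hbu, Sym2.eq_swap]
      exact hcut u b' hbu.symm hPu (hNP b' hb')
    · rw [if_neg hbu, Sym2.eq_swap]
      have hbp : G.Adj b' p := (key b' hb').resolve_left hbu
      exact hcut p b' hbp.symm hPp (hNP b' hb')
  have hguard : ∀ b1 ∈ N, ∀ b2 ∈ N, g b1 = g b2 → b1 = b2 := by
    intro b1 hb1 b2 hb2 heq
    have heq' : (if G.Adj b1 u then s(b1, u) else s(b1, p))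
        = (if G.Adj b2 u then s(b2, u) else s(b2, p)) := heq
    by_cases h1 : G.Adj b1 u <;> by_cases h2 : G.Adj b2 u
    · rw [if_pos h1, if_pos h2, Sym2.eq_iff] at heq'
      rcases heq' with ⟨h, _⟩ | ⟨hh, hh'⟩
      · exact h
      · exact absurd hPu (by rw [hh] at hb1; exact hNP u hb1)
    · rw [if_pos h1, if_neg h2, Sym2.eq_iff] at heq'
      rcases heq' with ⟨_, hh⟩ | ⟨hh, hh'⟩
      · exact absurd hh.symm hpu.ne
      · exact absurd hPu (by rw [hh']; exact hNP b2 hb2)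
    · rw [if_neg h1, if_pos h2, Sym2.eq_iff] at heq'
      rcases heq' with ⟨_, hh⟩ | ⟨hh, hh'⟩
      · exact absurd hh hpu.ne
      · exact absurd hPp (by rw [hh']; exact hNP b2 hb2)
    · rw [if_neg h1, if_neg h2, Sym2.eq_iff] at heq'
      rcases heq' with ⟨h, _⟩ | ⟨hh, hh'⟩
      · exact h
      · exact hh.trans hh'
  have hginj : Set.InjOn g ↑N := fun b1 hb1 b2 hb2 heq =>
    hguard b1 (Finset.mem_coe.mp hb1) b2 (Finset.mem_coe.mp hb2) heq
  set S : Finset (Sym2 V) := insert s(u,v) (N.image g) with hS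
  have hSF : S ⊆ F := by
    rw [hS]
    apply Finset.insert_subset (hcut u v huv hPu hPv)
    intro e he
    rw [Finset.mem_image] at he
    obtain ⟨b', hb', rfl⟩ := he
    exact hgF b' hb'
  have huvnot : s(u,v) ∉ N.image g := by
    rw [Finset.mem_image]
    rintro ⟨b', hb', heq⟩
    have heq' : (if G.Adj b' u then s(b', u) else s(b', p)) = s(u,v) := heq
    by_cases hbu : G.Adj b' u
    · rw [if_pos hbu, Sym2.eq_iff] at heq'
      rcases heq' with ⟨_, hh⟩ | ⟨hh, _⟩
      · exact huv.ne hh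
      · exact (hNmem b' hb').2 hh
    · rw [if_neg hbu, Sym2.eq_iff] at heq'
      rcases heq' with ⟨_, hh⟩ | ⟨hh, _⟩
      · exact hPv (by rw [← hh]; exact hPp)
      · exact (hNmem b' hb').2 hh
  have hScard : δ ≤ S.card := by
    have hvmem : v ∈ G.neighborFinset b := by rw [mem_neighborFinset]; exact hvb.symm
    rw [hS, Finset.card_insert_of_notMem huvnot, Finset.card_image_of_injOn hginj, hN,
      Finset.card_erase_of_mem hvmem]
    have h1 := hδ b
    have h2 : 1 ≤ (G.neighborFinset b).card := Finset.card_pos.mpr ⟨v, hvmem⟩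
    have h3 : (G.neighborFinset b).card = G.degree b := rfl
    omega
  exact absurd (le_trans hScard (Finset.card_le_card hSF)) (by omega)

lemma case3 {V : Type*} [Fintype V] [DecidableEq V] {G : SimpleGraph V} [DecidableRel G.Adj]
    (hZ2 : IsEmpty (Z2 ↪g G)) (hP6 : IsEmpty (pathGraph 6 ↪g G))
    {F : Finset (Sym2 V)} {P : V → Prop} {δ : ℕ}
    (hcut : ∀ x y, G.Adj x y → P x → ¬ P y → s(x,y) ∈ F)
    (hδ : ∀ w, δ ≤ G.degree w) (hk : F.card < δ)
    {a u v b : V} (hPa : P a) (hPu : P u) (hPv : ¬P v) (hPb : ¬P b)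
    (hau : G.Adj a u) (huv : G.Adj u v) (hvb : G.Adj v b)
    (nav : ¬G.Adj a v) (nab : ¬G.Adj a b) (nub : ¬G.Adj u b)
    (hdeepa : ∀ y, G.Adj a y → P y) (hdeepb : ∀ y, G.Adj b y → ¬P y) : False := by
  classical
  set W : Finset V := (G.neighborFinset a).erase u with hW
  set Wb : Finset V := (G.neighborFinset b).erase v with hWb
  have hWmem : ∀ x ∈ W, G.Adj a x ∧ x ≠ u := by
    intro x hx
    rw [hW, Finset.mem_erase, mem_neighborFinset] at hx
    exact ⟨hx.2, hx.1⟩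
  have hWP : ∀ x ∈ W, P x := fun x hx => hdeepa x (hWmem x hx).1
  have hWbmem : ∀ y ∈ Wb, G.Adj b y ∧ y ≠ v := by
    intro y hy
    rw [hWb, Finset.mem_erase, mem_neighborFinset] at hy
    exact ⟨hy.2, hy.1⟩
  have hWbP : ∀ y ∈ Wb, ¬ P y := fun y hy => hdeepb y (hWbmem y hy).1
  set X : Finset V := W.filter (fun x => ¬ G.Adj x v) with hX
  set Y : Finset V := Wb.filter (fun y => ¬ G.Adj y u) with hY
  have hXW : X ⊆ W := Finset.filter_subset _ _
  have hYWb : Y ⊆ Wb := Finset.filter_subset _ _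
  have hXv : ∀ x ∈ X, ¬ G.Adj x v := by
    intro x hx; rw [hX, Finset.mem_filter] at hx; exact hx.2
  have hYu : ∀ y ∈ Y, ¬ G.Adj y u := by
    intro y hy; rw [hY, Finset.mem_filter] at hy; exact hy.2
  have keyX : ∀ x ∈ X, ¬ G.Adj x u := by
    intro x hx hxu
    exact z2_of_config hZ2 a x u v b (hWmem x (hXW hx)).1 hau hxu huv hvb
      nav nab (hXv x hx) (fun h => (hdeepb x h.symm) (hWP x (hXW hx))) nub
  have keyY : ∀ y ∈ Y, ¬ G.Adj y v := by
    intro y hy hyv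
    exact z2_of_config hZ2 b y v u a (hWbmem y (hYWb hy)).1 hvb.symm hyv huv.symm hau.symm
      (fun h => nub h.symm) (fun h => nab h.symm) (hYu y hy)
      (fun h => (hWbP y (hYWb hy)) (hdeepa y h.symm)) (fun h => nav h.symm)
  have keyXY : ∀ x ∈ X, ∀ y ∈ Y, G.Adj x y := by
    intro x hx y hy
    by_contra hxy
    exact p6_of_config hP6 x a u v b y (hWmem x (hXW hx)).1.symm hau huv hvb (hWbmem y (hYWb hy)).1
      (keyX x hx) (hXv x hx) (fun h => (hdeepb x h.symm) (hWP x (hXW hx))) hxy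
      nav nab (fun h => (hWbP y (hYWb hy)) (hdeepa y h))
      nub (fun h => (hYu y hy) h.symm) (fun h => (keyY y hy) h.symm)
  set S0 : Finset (Sym2 V) := {s(u,v)} with hS0
  set S1 : Finset (Sym2 V) := (W \ X).image (fun x => s(x, v)) with hS1
  set S2 : Finset (Sym2 V) := (Wb \ Y).image (fun y => s(u, y)) with hS2
  set S3 : Finset (Sym2 V) := (X ×ˢ Y).image (fun q => s(q.1, q.2)) with hS3
  have hS1mem : ∀ e ∈ S1, ∃ x, x ∈ W ∧ G.Adj x v ∧ e = s(x, v) := by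
    intro e he
    rw [hS1, Finset.mem_image] at he
    obtain ⟨x, hx, rfl⟩ := he
    rw [Finset.mem_sdiff] at hx
    refine ⟨x, hx.1, ?_, rfl⟩
    by_contra hc
    exact hx.2 (by rw [hX, Finset.mem_filter]; exact ⟨hx.1, hc⟩)
  have hS2mem : ∀ e ∈ S2, ∃ y, y ∈ Wb ∧ G.Adj y u ∧ e = s(u, y) := by
    intro e he
    rw [hS2, Finset.mem_image] at he
    obtain ⟨y, hy, rfl⟩ := he
    rw [Finset.mem_sdiff] at hy
    refine ⟨y, hy.1, ?_, rfl⟩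
    by_contra hc
    exact hy.2 (by rw [hY, Finset.mem_filter]; exact ⟨hy.1, hc⟩)
  have hS0F : S0 ⊆ F := by
    rw [hS0]
    simp only [Finset.singleton_subset_iff]
    exact hcut u v huv hPu hPv
  have hS1F : S1 ⊆ F := by
    intro e he
    obtain ⟨x, hxW, hxv, rfl⟩ := hS1mem e he
    exact hcut x v hxv (hWP x hxW) hPv
  have hS2F : S2 ⊆ F := by
    intro e he
    obtain ⟨y, hyWb, hyu, rfl⟩ := hS2mem e he
    exact hcut u y hyu.symm hPu (hWbP y hyWb)
  have hS3F : S3 ⊆ F := by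
    intro e he
    rw [hS3, Finset.mem_image] at he
    obtain ⟨⟨x, y⟩, hq, rfl⟩ := he
    rw [Finset.mem_product] at hq
    exact hcut x y (keyXY x hq.1 y hq.2) (hWP x (hXW hq.1)) (hWbP y (hYWb hq.2))
  have hcard1 : S1.card = W.card - X.card := by
    rw [hS1, Finset.card_image_of_injOn, Finset.card_sdiff_of_subset hXW]
    intro x1 h1 x2 h2 heq
    rw [Sym2.eq_iff] at heq
    rcases heq with ⟨h, _⟩ | ⟨h, h'⟩
    · exact h
    · rw [Finset.mem_coe, Finset.mem_sdiff] at h1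
      exact absurd (hWP x1 h1.1) (by rw [h]; exact hPv)
  have hcard2 : S2.card = Wb.card - Y.card := by
    rw [hS2, Finset.card_image_of_injOn, Finset.card_sdiff_of_subset hYWb]
    intro y1 h1 y2 h2 heq
    rw [Sym2.eq_iff] at heq
    rcases heq with ⟨_, h⟩ | ⟨h, h'⟩
    · exact h
    · rw [Finset.mem_coe, Finset.mem_sdiff] at h2
      exact absurd (by rw [← h]; exact hPu) (hWbP y2 h2.1)
  have hcard3 : S3.card = X.card * Y.card := by
    rw [hS3, Finset.card_image_of_injOn, Finset.card_product]
    rintro ⟨x1, y1⟩ h1 ⟨x2, y2⟩ h2 heq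
    rw [Finset.mem_coe, Finset.mem_product] at h1 h2
    simp only [Sym2.eq_iff] at heq
    rcases heq with ⟨h, h'⟩ | ⟨h, h'⟩
    · exact Prod.ext h h'
    · exact absurd (hWP x1 (hXW h1.1)) (by rw [h]; exact hWbP y2 (hYWb h2.2))
  -- disjointness
  have hPmem1 : ∀ x ∈ W, P x := hWP
  have d01 : Disjoint S0 S1 := by
    rw [Finset.disjoint_left]
    intro e he0 he1
    obtain ⟨x, hxW, _, rfl⟩ := hS1mem e he1
    rw [hS0, Finset.mem_singleton, Sym2.eq_iff] at he0
    rcases he0 with ⟨h, _⟩ | ⟨h, h'⟩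
    · exact (hWmem x hxW).2 h
    · exact huv.ne h'.symm
  have d02 : Disjoint S0 S2 := by
    rw [Finset.disjoint_left]
    intro e he0 he2
    obtain ⟨y, hyWb, _, rfl⟩ := hS2mem e he2
    rw [hS0, Finset.mem_singleton, Sym2.eq_iff] at he0
    rcases he0 with ⟨_, h⟩ | ⟨h, h'⟩
    · exact (hWbmem y hyWb).2 h
    · exact hPv (by rw [← h]; exact hPu)
  have d03 : Disjoint S0 S3 := by
    rw [Finset.disjoint_left]
    intro e he0 he3
    rw [hS3, Finset.mem_image] at he3
    obtain ⟨⟨x, y⟩, hq, rfl⟩ := he3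
    rw [Finset.mem_product] at hq
    rw [hS0, Finset.mem_singleton, Sym2.eq_iff] at he0
    rcases he0 with ⟨h, _⟩ | ⟨h, _⟩
    · exact (hWmem x (hXW hq.1)).2 h
    · exact hPv (by rw [← h]; exact hWP x (hXW hq.1))
  have d12 : Disjoint S1 S2 := by
    rw [Finset.disjoint_left]
    intro e he1 he2
    obtain ⟨x, hxW, _, rfl⟩ := hS1mem e he1
    obtain ⟨y, hyWb, _, heq⟩ := hS2mem _ he2
    rw [Sym2.eq_iff] at heq
    rcases heq with ⟨h, h'⟩ | ⟨h, h'⟩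
    · exact (hWmem x hxW).2 h
    · exact huv.ne h'.symm
  have d13 : Disjoint S1 S3 := by
    rw [Finset.disjoint_left]
    intro e he1 he3
    obtain ⟨x1, hxW, _, rfl⟩ := hS1mem e he1
    rw [hS3, Finset.mem_image] at he3
    obtain ⟨⟨x2, y⟩, hq, heq⟩ := he3
    rw [Finset.mem_product] at hq
    rw [Sym2.eq_iff] at heq
    rcases heq with ⟨h, h'⟩ | ⟨h, h'⟩
    · exact (hWbmem y (hYWb hq.2)).2 h'
    · exact hPv (by rw [← h]; exact hWP x2 (hXW hq.1))
  have d23 : Disjoint S2 S3 := by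
    rw [Finset.disjoint_left]
    intro e he2 he3
    obtain ⟨y1, hyWb, _, rfl⟩ := hS2mem e he2
    rw [hS3, Finset.mem_image] at he3
    obtain ⟨⟨x, y2⟩, hq, heq⟩ := he3
    rw [Finset.mem_product] at hq
    rw [Sym2.eq_iff] at heq
    rcases heq with ⟨h, h'⟩ | ⟨h, h'⟩
    · exact (hWmem x (hXW hq.1)).2 h
    · have h'' : y2 = u := h'
      exact (hWbP y2 (hYWb hq.2)) (by rw [h'']; exact hPu)
  have hsub : S0 ∪ S1 ∪ S2 ∪ S3 ⊆ F :=
    Finset.union_subset (Finset.union_subset (Finset.union_subset hS0F hS1F) hS2F) hS3F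
  have hcardsum : S0.card + S1.card + S2.card + S3.card ≤ F.card := by
    rw [← Finset.card_union_of_disjoint d01, ← Finset.card_union_of_disjoint
      (Finset.disjoint_union_left.mpr ⟨d02, d12⟩), ← Finset.card_union_of_disjoint
      (Finset.disjoint_union_left.mpr ⟨Finset.disjoint_union_left.mpr ⟨d03, d13⟩, d23⟩)]
    exact Finset.card_le_card hsub
  have hS0card : S0.card = 1 := rfl
  have hWcard : W.card + 1 = G.degree a := by
    rw [hW, Finset.card_erase_of_mem (by rw [mem_neighborFinset]; exact hau)]
    have : 1 ≤ (G.neighborFinset a).card :=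
      Finset.card_pos.mpr ⟨u, by rw [mem_neighborFinset]; exact hau⟩
    have hd : (G.neighborFinset a).card = G.degree a := rfl
    omega
  have hWbcard : Wb.card + 1 = G.degree b := by
    rw [hWb, Finset.card_erase_of_mem (by rw [mem_neighborFinset]; exact hvb.symm)]
    have : 1 ≤ (G.neighborFinset b).card :=
      Finset.card_pos.mpr ⟨v, by rw [mem_neighborFinset]; exact hvb.symm⟩
    have hd : (G.neighborFinset b).card = G.degree b := rfl
    omega
  have hxW : X.card ≤ W.card := Finset.card_le_card hXW
  have hyWb : Y.card ≤ Wb.card := Finset.card_le_card hYWb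
  have hda := hδ a
  have hdb := hδ b
  -- final arithmetic
  rcases Nat.eq_zero_or_pos X.card with hx0 | hx1
  · omega
  rcases Nat.eq_zero_or_pos Y.card with hy0 | hy1
  · omega
  obtain ⟨m, hm⟩ : ∃ m, X.card = m + 1 := ⟨X.card - 1, by omega⟩
  obtain ⟨n, hn⟩ : ∃ n, Y.card = n + 1 := ⟨Y.card - 1, by omega⟩
  have hgt : X.card * Y.card = m * n + m + n + 1 := by rw [hm, hn]; ring
  omega

lemma core {V : Type*} [Fintype V] [DecidableEq V] {G : SimpleGraph V} [DecidableRel G.Adj]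
    (hZ2 : IsEmpty (Z2 ↪g G)) (hP6 : IsEmpty (pathGraph 6 ↪g G))
    {F : Finset (Sym2 V)} {P : V → Prop} {δ : ℕ}
    (hcut : ∀ x y, G.Adj x y → P x → ¬ P y → s(x,y) ∈ F)
    (hδ : ∀ w, δ ≤ G.degree w) (hk : F.card < δ)
    {a b : V} (hPa : P a) (hPb : ¬P b)
    (hdeepa : ∀ y, G.Adj a y → P y) (hdeepb : ∀ y, G.Adj b y → ¬P y)
    (hreach : G.Reachable a b) : False := by
  classical
  set d := G.dist a b with hd
  obtain ⟨w, hw⟩ := hreach.exists_walk_length_eq_dist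
  rw [← hd] at hw
  have hne : a ≠ b := fun h => hPb (h ▸ hPa)
  have hd1 : d ≠ 0 := by
    rw [hd]
    exact fun h => hne (hreach.dist_eq_zero_iff.mp h)
  have hd5 : d < 5 := by
    by_contra hge
    push_neg at hge
    cases w with
    | nil => simp at hw; omega
    | cons h1 w1 =>
    rename_i x1
    cases w1 with
    | nil => simp at hw; omega
    | cons h2 w2 =>
    rename_i x2
    cases w2 with
    | nil => simp at hw; omega
    | cons h3 w3 =>
    rename_i x3
    cases w3 with
    | nil => simp at hw; omega
    | cons h4 w4 =>
    rename_i x4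
    cases w4 with
    | nil => simp at hw; omega
    | cons h5 w5 =>
    rename_i x5
    simp only [Walk.length_cons] at hw
    have hlen : w5.length + 5 = d := by omega
    refine p6_of_config hP6 a x1 x2 x3 x4 x5 h1 h2 h3 h4 h5 ?_ ?_ ?_ ?_ ?_ ?_ ?_ ?_ ?_ ?_
    · intro c
      have hle := dist_le (Walk.cons c (Walk.cons h3 (Walk.cons h4 (Walk.cons h5 w5))))
      rw [← hd] at hle
      simp only [Walk.length_cons] at hle
      omega
    · intro c
      have hle := dist_le (Walk.cons c (Walk.cons h4 (Walk.cons h5 w5)))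
      rw [← hd] at hle
      simp only [Walk.length_cons] at hle
      omega
    · intro c
      have hle := dist_le (Walk.cons c (Walk.cons h5 w5))
      rw [← hd] at hle
      simp only [Walk.length_cons] at hle
      omega
    · intro c
      have hle := dist_le (Walk.cons c w5)
      rw [← hd] at hle
      simp only [Walk.length_cons] at hle
      omega
    · intro c
      have hle := dist_le (Walk.cons h1 (Walk.cons c (Walk.cons h4 (Walk.cons h5 w5))))
      rw [← hd] at hle
      simp only [Walk.length_cons] at hle
      omega
    · intro c
      have hle := dist_le (Walk.cons h1 (Walk.cons c (Walk.cons h5 w5)))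
      rw [← hd] at hle
      simp only [Walk.length_cons] at hle
      omega
    · intro c
      have hle := dist_le (Walk.cons h1 (Walk.cons c w5))
      rw [← hd] at hle
      simp only [Walk.length_cons] at hle
      omega
    · intro c
      have hle := dist_le (Walk.cons h1 (Walk.cons h2 (Walk.cons c (Walk.cons h5 w5))))
      rw [← hd] at hle
      simp only [Walk.length_cons] at hle
      omega
    · intro c
      have hle := dist_le (Walk.cons h1 (Walk.cons h2 (Walk.cons c w5)))
      rw [← hd] at hle
      simp only [Walk.length_cons] at hle
      omega
    · intro c
      have hle := dist_le (Walk.cons h1 (Walk.cons h2 (Walk.cons h3 (Walk.cons c w5))))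
      rw [← hd] at hle
      simp only [Walk.length_cons] at hle
      omega
  have hd2 : d ≠ 1 := by
    intro h1
    have : G.Adj a b := dist_eq_one_iff_adj.mp (by rw [← hd]; exact h1)
    exact hPb (hdeepa b this)
  have hd3 : d ≠ 2 := by
    intro hdd
    rw [hdd] at hw
    cases w with
    | nil => simp at hw
    | cons h1 w1 =>
    rename_i m
    cases w1 with
    | nil => simp at hw
    | cons h2 w2 =>
    rename_i m2
    cases w2 with
    | nil => exact hdeepb m h2.symm (hdeepa m h1)
    | cons h3 w3 => simp at hw
  have hd34 : d = 3 ∨ d = 4 := by omega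
  rcases hd34 with hdd | hdd
  · -- distance 3
    rw [hdd] at hw
    cases w with
    | nil => simp at hw
    | cons h1 w1 =>
    rename_i u
    cases w1 with
    | nil => simp at hw
    | cons h2 w2 =>
    rename_i v
    cases w2 with
    | nil => simp at hw
    | cons h3 w3 =>
    rename_i b'
    cases w3 with
    | cons h4 w4 => simp at hw
    | nil =>
    have nav : ¬ G.Adj a v := by
      intro c
      have hle := dist_le (Walk.cons c (Walk.cons h3 Walk.nil))
      rw [← hd] at hle
      simp only [Walk.length_cons, Walk.length_nil] at hle
      omega
    have nab : ¬ G.Adj a b := by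
      intro c
      have hle := dist_le (Walk.cons c Walk.nil)
      rw [← hd] at hle
      simp only [Walk.length_cons, Walk.length_nil] at hle
      omega
    have nub : ¬ G.Adj u b := by
      intro c
      have hle := dist_le (Walk.cons h1 (Walk.cons c Walk.nil))
      rw [← hd] at hle
      simp only [Walk.length_cons, Walk.length_nil] at hle
      omega
    exact case3 hZ2 hP6 hcut hδ hk hPa (hdeepa u h1) (hdeepb v h3.symm) hPb
      h1 h2 h3 nav nab nub hdeepa hdeepb
  · -- distance 4
    rw [hdd] at hw
    cases w with
    | nil => simp at hw
    | cons h1 w1 =>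
    rename_i x1
    cases w1 with
    | nil => simp at hw
    | cons h2 w2 =>
    rename_i x2
    cases w2 with
    | nil => simp at hw
    | cons h3 w3 =>
    rename_i x3
    cases w3 with
    | nil => simp at hw
    | cons h4 w4 =>
    rename_i x4
    cases w4 with
    | cons h5 w5 => simp at hw
    | nil =>
    have n02 : ¬ G.Adj a x2 := by
      intro c
      have hle := dist_le (Walk.cons c (Walk.cons h3 (Walk.cons h4 Walk.nil)))
      rw [← hd] at hle
      simp only [Walk.length_cons, Walk.length_nil] at hle
      omega
    have n03 : ¬ G.Adj a x3 := by
      intro c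
      have hle := dist_le (Walk.cons c (Walk.cons h4 Walk.nil))
      rw [← hd] at hle
      simp only [Walk.length_cons, Walk.length_nil] at hle
      omega
    have n04 : ¬ G.Adj a b := by
      intro c
      have hle := dist_le (Walk.cons c Walk.nil)
      rw [← hd] at hle
      simp only [Walk.length_cons, Walk.length_nil] at hle
      omega
    have n13 : ¬ G.Adj x1 x3 := by
      intro c
      have hle := dist_le (Walk.cons h1 (Walk.cons c (Walk.cons h4 Walk.nil)))
      rw [← hd] at hle
      simp only [Walk.length_cons, Walk.length_nil] at hle
      omega
    have n14 : ¬ G.Adj x1 b := by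
      intro c
      have hle := dist_le (Walk.cons h1 (Walk.cons c Walk.nil))
      rw [← hd] at hle
      simp only [Walk.length_cons, Walk.length_nil] at hle
      omega
    have n24 : ¬ G.Adj x2 b := by
      intro c
      have hle := dist_le (Walk.cons h1 (Walk.cons h2 (Walk.cons c Walk.nil)))
      rw [← hd] at hle
      simp only [Walk.length_cons, Walk.length_nil] at hle
      omega
    have hPx1 : P x1 := hdeepa x1 h1
    have hPx3 : ¬ P x3 := hdeepb x3 h4.symm
    by_cases hPx2 : P x2
    · exact case4 hZ2 hP6 hcut hδ hk hPa hPx1 hPx2 hPx3 hPb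
        h1 h2 h3 h4 n02 n03 n04 n13 n14 n24 hdeepa hdeepb
    · have hcut' : ∀ x y, G.Adj x y → ¬ P x → ¬¬ P y → s(x,y) ∈ F := by
        intro x y hxy hx hy
        rw [Sym2.eq_swap]
        exact hcut y x hxy.symm (not_not.mp hy) hx
      exact case4 (P := fun z => ¬ P z) hZ2 hP6 hcut' hδ hk hPb hPx3 hPx2
        (fun h => h hPx1) (fun h => h hPa)
        h4.symm h3.symm h2.symm h1.symm
        (fun h => n24 h.symm) (fun h => n14 h.symm) (fun h => n04 h.symm)
        (fun h => n13 h.symm) (fun h => n03 h.symm) (fun h => n02 h.symm)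
        (fun y h => hdeepb y h) (fun y h hh => hh (hdeepa y h))

theorem z2_p6_free_edgeConn_eq_minDeg {V : Type*} [Fintype V] (G : SimpleGraph V)
    (hG : G.Connected) (hcard : 2 ≤ Fintype.card V)
    (hZ2 : IsEmpty (Z2 ↪g G)) (hP6 : IsEmpty (pathGraph 6 ↪g G)) :
    edgeConn G = minDeg G := by
  classical
  have hV : Nonempty V := Fintype.card_pos_iff.mp (by omega)
  obtain ⟨v0⟩ := hV
  haveI : Nonempty V := ⟨v0⟩
  have hncard : ∀ v : V, (G.neighborSet v).ncard = G.degree v := by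
    intro v
    rw [Set.ncard_eq_toFinset_card', ← neighborFinset_def]
    rfl
  have hminDeg_le : ∀ v : V, minDeg G ≤ G.degree v := by
    intro v
    exact Nat.sInf_le ⟨v, (hncard v).symm⟩
  have hmemS : ∀ v : V, G.degree v ∈
      {k | ∃ F : Finset (Sym2 V), ↑F ⊆ G.edgeSet ∧ F.card = k ∧
        ¬ (G.deleteEdges ↑F).Connected} := by
    intro v
    refine ⟨G.incidenceFinset v, ?_, ?_, ?_⟩
    · intro e he
      rw [Finset.mem_coe, mem_incidenceFinset] at he
      exact G.incidenceSet_subset v he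
    · exact G.card_incidenceFinset_eq_degree v
    · intro hconn
      obtain ⟨u, hu⟩ := Fintype.exists_ne_of_one_lt_card (by omega) v
      obtain ⟨p⟩ := hconn.preconnected v u
      cases p with
      | nil => exact hu rfl
      | cons hadj q =>
        rw [deleteEdges_adj] at hadj
        exact hadj.2 (by
          rw [Finset.mem_coe, mem_incidenceFinset]
          exact G.mk'_mem_incidenceSet_left_iff.mpr hadj.1)
  have hSne : {k | ∃ F : Finset (Sym2 V), ↑F ⊆ G.edgeSet ∧ F.card = k ∧
      ¬ (G.deleteEdges ↑F).Connected}.Nonempty := ⟨G.degree v0, hmemS v0⟩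
  unfold edgeConn minDeg
  apply le_antisymm
  · -- edgeConn ≤ minDeg
    refine le_csInf ⟨(G.neighborSet v0).ncard, ⟨v0, rfl⟩⟩ ?_
    rintro d ⟨v, rfl⟩
    rw [hncard v]
    exact Nat.sInf_le (hmemS v)
  · -- minDeg ≤ edgeConn
    apply le_csInf hSne
    rintro k ⟨F, hsub, rfl, hdisc⟩
    by_contra hlt
    push_neg at hlt
    have hnp : ¬ (G.deleteEdges ↑F).Preconnected := fun hp => hdisc ⟨hp⟩
    rw [Preconnected] at hnp
    push_neg at hnp
    obtain ⟨x, y, hxy⟩ := hnp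
    set P : V → Prop := fun z => (G.deleteEdges (↑F : Set (Sym2 V))).Reachable x z with hP
    have hcut : ∀ p q, G.Adj p q → P p → ¬ P q → s(p,q) ∈ F := by
      intro p q hadj hp hq
      by_contra hno
      have hHadj : (G.deleteEdges (↑F : Set (Sym2 V))).Adj p q := by
        rw [deleteEdges_adj]
        exact ⟨hadj, fun hmem => hno (Finset.mem_coe.mp hmem)⟩
      exact hq (hp.trans hHadj.reachable)
    have hcut' : ∀ p q, G.Adj p q → ¬ P p → ¬ ¬ P q → s(p,q) ∈ F := by
      intro p q hadj hp hq
      rw [Sym2.eq_swap]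
      exact hcut q p hadj.symm (not_not.mp hq) hp
    have hδ : ∀ w, minDeg G ≤ G.degree w := hminDeg_le
    obtain ⟨a, hPa, hdeepa⟩ := exists_deep hcut hδ hlt (Reachable.refl x)
    obtain ⟨b, hPb, hdeepb⟩ := exists_deep hcut' hδ hlt hxy
    exact (core hZ2 hP6 hcut hδ hlt hPa hPb hdeepa hdeepb (hG.preconnected a b)).elim
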